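/- Let λ ∈ ℝ be such that λ ≠ k(k+1) for every k ∈ ℕ. Then every twice-differentiable solution a : (−1,1) → ℝ of Legendre's equation (1−τ²)·a″(τ) − 2τ·a′(τ) + λ·a(τ) = 0 that is bounded on (−1,1) is identically zero. In particular, for n > 4 and ℓ > 0 with λ = ℓ(ℓ+n−3) not of the form k(k+1), the only p = 0 mode solution of the conformal wave equation that is regular at both critical sets τ = ±1 is the trivial one, and the corresponding asymptotic charge vanishes. -/

import Mathlib

open Set Filter MeasureTheory Topology


lemma stmt13_blowup {a d : ℝ → ℝ} {M c τ₀ : ℝ} (hc : 0 < c) (hτ₀ : τ₀ ∈ Set.Ico (0:ℝ) 1)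
    (hd : ∀ τ ∈ Set.Ico τ₀ 1, HasDerivAt a (d τ) τ)
    (hlow : ∀ τ ∈ Set.Ico τ₀ 1, c / (4 * (1 - τ)) ≤ d τ)
    (hM : ∀ τ ∈ Set.Ico τ₀ 1, a τ ≤ M) : False := by
  set h : ℝ → ℝ := fun τ => a τ + c / 4 * Real.log (1 - τ) with hh
  have hτ₀1 : τ₀ < 1 := hτ₀.2
  have hder : ∀ τ ∈ Set.Ico τ₀ 1, HasDerivAt h (d τ + c / 4 * (-1 / (1 - τ))) τ := by
    intro τ hτ
    have h1 : (1:ℝ) - τ ≠ 0 := by nlinarith [hτ.2]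
    have hlog : HasDerivAt (fun τ : ℝ => Real.log (1 - τ)) (-1 / (1 - τ)) τ := by
      have := ((hasDerivAt_id τ).const_sub 1).log h1
      simpa [neg_div] using this
    exact (hd τ hτ).add (hlog.const_mul (c / 4))
  have hmono : MonotoneOn h (Set.Ico τ₀ 1) := by
    apply monotoneOn_of_hasDerivWithinAt_nonneg (convex_Ico τ₀ 1)
      (fun τ hτ => (hder τ hτ).continuousAt.continuousWithinAt)
      (f' := fun τ => d τ + c / 4 * (-1 / (1 - τ)))
      (fun τ hτ => ((hder τ (interior_subset hτ)).hasDerivWithinAt))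
    intro τ hτ
    rw [interior_Ico] at hτ
    have h1 : (0:ℝ) < 1 - τ := by linarith [hτ.2]
    have := hlow τ ⟨hτ.1.le, hτ.2⟩
    have : c / (4 * (1 - τ)) ≤ d τ := this
    have he : c / 4 * (-1 / (1 - τ)) = -(c / (4 * (1 - τ))) := by
      field_simp
    rw [he]
    linarith
  -- choose τ₁ close to 1
  set R : ℝ := max (Real.log (1 / (1 - τ₀))) (4 / c * (M + 1 - h τ₀)) with hR
  set τ₁ : ℝ := 1 - Real.exp (-R) with hτ₁def
  have h1τ₀ : (0:ℝ) < 1 - τ₀ := by linarith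
  have hexple : Real.exp (-R) ≤ 1 - τ₀ := by
    have : Real.log (1 / (1 - τ₀)) ≤ R := le_max_left _ _
    have h2 : -R ≤ Real.log (1 - τ₀) := by
      rw [Real.log_div one_ne_zero (ne_of_gt h1τ₀), Real.log_one] at this
      linarith
    calc Real.exp (-R) ≤ Real.exp (Real.log (1 - τ₀)) := Real.exp_le_exp.2 h2
      _ = 1 - τ₀ := Real.exp_log h1τ₀
  have hτ₁mem : τ₁ ∈ Set.Ico τ₀ 1 := by
    constructor
    · simp only [hτ₁def]; linarith
    · simp only [hτ₁def]; have := Real.exp_pos (-R); linarith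
  have hτ₀mem : τ₀ ∈ Set.Ico τ₀ 1 := ⟨le_refl _, hτ₀1⟩
  have hmle : h τ₀ ≤ h τ₁ := hmono hτ₀mem hτ₁mem hτ₁mem.1
  have hlogτ₁ : Real.log (1 - τ₁) = -R := by
    simp [hτ₁def, Real.log_exp]
  have haτ₁ : a τ₁ = h τ₁ + c / 4 * R := by
    simp only [hh, hlogτ₁]; ring
  have hRge : 4 / c * (M + 1 - h τ₀) ≤ R := le_max_right _ _
  have hcR : M + 1 - h τ₀ ≤ c / 4 * R := by
    have h4c : (0:ℝ) < 4 / c := by positivity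
    calc M + 1 - h τ₀ = c / 4 * (4 / c * (M + 1 - h τ₀)) := by field_simp
      _ ≤ c / 4 * R := by nlinarith
  clear_value τ₁ R h
  have key : M + 1 ≤ a τ₁ := by
    rw [haτ₁]
    have := hmle
    have := hcR
    linarith [hmle, hcR]
  linarith [hM τ₁ hτ₁mem]


lemma stmt13_bderiv (lam : ℝ) (a : ℝ → ℝ)
    (hdiff : ∀ τ ∈ Set.Ioo (-1:ℝ) 1,
      DifferentiableAt ℝ a τ ∧ DifferentiableAt ℝ (deriv a) τ)
    (hode : ∀ τ ∈ Set.Ioo (-1:ℝ) 1,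
      (1 - τ ^ 2) * deriv (deriv a) τ - 2 * τ * deriv a τ + lam * a τ = 0) :
    ∀ τ ∈ Set.Ioo (-1:ℝ) 1,
      HasDerivAt (fun τ => (1 - τ ^ 2) * deriv a τ) (-(lam * a τ)) τ := by
  intro τ hτ
  have hq : HasDerivAt (fun τ : ℝ => 1 - τ ^ 2) (-(2 * τ ^ 1)) τ :=
    (hasDerivAt_pow 2 τ).const_sub 1
  have ha' : HasDerivAt (deriv a) (deriv (deriv a) τ) τ := (hdiff τ hτ).2.hasDerivAt
  have := hq.mul ha'
  refine this.congr_deriv ?_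
  have h0 := hode τ hτ
  simp only [pow_one]
  nlinarith [h0]

lemma stmt13_bound_right (lam M : ℝ) (a : ℝ → ℝ)
    (hdiff : ∀ τ ∈ Set.Ioo (-1:ℝ) 1,
      DifferentiableAt ℝ a τ ∧ DifferentiableAt ℝ (deriv a) τ)
    (hode : ∀ τ ∈ Set.Ioo (-1:ℝ) 1,
      (1 - τ ^ 2) * deriv (deriv a) τ - 2 * τ * deriv a τ + lam * a τ = 0)
    (hM : ∀ τ ∈ Set.Ioo (-1:ℝ) 1, |a τ| ≤ M) :
    ∀ τ ∈ Set.Ioo (-1:ℝ) 1, |(1 - τ ^ 2) * deriv a τ| ≤ |lam| * M * (1 - τ) := by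
  have hM0 : 0 ≤ M := le_trans (abs_nonneg _) (hM 0 (by norm_num))
  set K : ℝ := |lam| * M with hK
  have hK0 : 0 ≤ K := mul_nonneg (abs_nonneg _) hM0
  set b : ℝ → ℝ := fun τ => (1 - τ ^ 2) * deriv a τ with hbdef
  have hb' := stmt13_bderiv lam a hdiff hode
  -- Lipschitz bound for b on Ioo
  have hlip : ∀ x ∈ Set.Ioo (-1:ℝ) 1, ∀ y ∈ Set.Ioo (-1:ℝ) 1, ‖b y - b x‖ ≤ K * ‖y - x‖ := by
    intro x hx y hy
    refine (convex_Ioo (-1:ℝ) 1).norm_image_sub_le_of_norm_hasDerivWithin_le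
      (f' := fun τ => -(lam * a τ))
      (fun τ hτ => (hb' τ hτ).hasDerivWithinAt) ?_ hx hy
    intro τ hτ
    have := hM τ hτ
    calc ‖-(lam * a τ)‖ = |lam| * |a τ| := by rw [norm_neg, Real.norm_eq_abs, abs_mul]
      _ ≤ |lam| * M := by gcongr
      _ = K := rfl
  have hlipOn : LipschitzOnWith (Real.toNNReal K) b (Set.Ioo (-1:ℝ) 1) := by
    apply LipschitzOnWith.of_dist_le_mul
    intro x hx y hy
    rw [Real.dist_eq, Real.dist_eq, Real.coe_toNNReal K hK0]
    simpa [Real.norm_eq_abs] using hlip y hy x hx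
  obtain ⟨B, hBlip, hEqOn⟩ := hlipOn.extend_real
  haveI hNeBot : (𝓝[Set.Ioo (-1:ℝ) 1] (1:ℝ)).NeBot := by
    refine mem_closure_iff_nhdsWithin_neBot.1 ?_
    rw [closure_Ioo (by norm_num : (-1:ℝ) ≠ 1)]
    exact ⟨by norm_num, le_refl 1⟩
  have hbB : Tendsto b (𝓝[Set.Ioo (-1:ℝ) 1] (1:ℝ)) (𝓝 (B 1)) := by
    have h1 : Tendsto B (𝓝[Set.Ioo (-1:ℝ) 1] (1:ℝ)) (𝓝 (B 1)) :=
      (hBlip.continuous.tendsto 1).mono_left nhdsWithin_le_nhds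
    refine h1.congr' ?_
    filter_upwards [eventually_mem_nhdsWithin] with t ht
    exact (hEqOn ht).symm
  have hB1 : B 1 = 0 := by
    by_contra hc
    set s : ℝ := if 0 < B 1 then 1 else -1 with hs
    have hsabs : ∀ x : ℝ, s * x ≤ |x| := by
      intro x
      by_cases h : 0 < B 1
      · simp only [hs, h, if_true, one_mul]; exact le_abs_self x
      · simp only [hs, h, if_false, neg_one_mul]; exact neg_le_abs x
    have hcpos : 0 < s * B 1 := by
      by_cases h : 0 < B 1
      · simpa [hs, h] using h
      · simp only [hs, h, if_false]
        rcases lt_or_eq_of_le (not_lt.1 h) with h' | h'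
        · linarith
        · exact absurd h' hc
    set c : ℝ := s * B 1 with hcdef
    have hbB' : Tendsto (fun t => s * b t) (𝓝[Set.Ioo (-1:ℝ) 1] (1:ℝ)) (𝓝 c) :=
      hbB.const_mul s
    have hev : ∀ᶠ t in 𝓝[Set.Ioo (-1:ℝ) 1] (1:ℝ), c / 2 < s * b t :=
      hbB'.eventually (eventually_gt_nhds (half_lt_self hcpos))
    rw [eventually_nhdsWithin_iff, Metric.eventually_nhds_iff] at hev
    obtain ⟨ε, hε, hev⟩ := hev
    set τ₀ : ℝ := max (1 - ε / 2) (1 / 2) with hτ₀def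
    have hτ₀mem : τ₀ ∈ Set.Ico (0:ℝ) 1 := by
      constructor
      · calc (0:ℝ) ≤ 1/2 := by norm_num
          _ ≤ τ₀ := le_max_right _ _
      · exact max_lt (by linarith) (by norm_num)
    have hsub : ∀ τ ∈ Set.Ico τ₀ 1, τ ∈ Set.Ioo (-1:ℝ) 1 ∧ c / 2 < s * b τ := by
      intro τ hτ
      have h1 : (1:ℝ)/2 ≤ τ := le_trans (le_max_right _ _) hτ.1
      have hmem : τ ∈ Set.Ioo (-1:ℝ) 1 := ⟨by linarith, hτ.2⟩
      have hd : dist τ 1 < ε := by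
        rw [Real.dist_eq, abs_sub_lt_iff]
        have h2 : 1 - ε/2 ≤ τ := le_trans (le_max_left _ _) hτ.1
        constructor <;> [linarith [hτ.2]; linarith]
      exact ⟨hmem, hev hd hmem⟩
    refine stmt13_blowup (a := fun τ => s * a τ) (d := fun τ => s * deriv a τ)
      (M := M) (c := c) (τ₀ := τ₀) hcpos hτ₀mem ?_ ?_ ?_
    · intro τ hτ
      exact ((hdiff τ (hsub τ hτ).1).1.hasDerivAt).const_mul s
    · intro τ hτ
      have hbpos := (hsub τ hτ).2
      have h1 : (1:ℝ)/2 ≤ τ := le_trans (le_max_right _ _) hτ.1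
      have h2 : (0:ℝ) < 1 - τ := by linarith [hτ.2]
      have hA : c / 2 < (1 - τ ^ 2) * (s * deriv a τ) := by
        calc c / 2 < s * b τ := hbpos
          _ = (1 - τ ^ 2) * (s * deriv a τ) := by simp only [hbdef]; ring
      have h4 : (0:ℝ) < 1 - τ ^ 2 := by nlinarith
      have ha' : 0 < s * deriv a τ := by
        by_contra h
        push_neg at h
        nlinarith
      show c / (4 * (1 - τ)) ≤ s * deriv a τ
      rw [div_le_iff₀ (by positivity : (0:ℝ) < 4 * (1 - τ))]
      nlinarith [mul_nonneg (mul_nonneg h2.le h2.le) ha'.le]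
    · intro τ hτ
      exact le_trans (hsabs (a τ)) (hM τ (hsub τ hτ).1)
  -- now the bound
  intro τ hτ
  show |b τ| ≤ K * (1 - τ)
  have hb0 : Tendsto b (𝓝[Set.Ioo (-1:ℝ) 1] (1:ℝ)) (𝓝 0) := hB1 ▸ hbB
  have hT : Tendsto (fun t => K * dist τ t + |b t|)
      (𝓝[Set.Ioo (-1:ℝ) 1] (1:ℝ)) (𝓝 (K * dist τ 1 + |(0:ℝ)|)) := by
    refine Tendsto.add ?_ hb0.abs
    exact (((continuous_const.dist continuous_id).tendsto 1).mono_left nhdsWithin_le_nhds).const_mul K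
  have hval : K * dist τ 1 + |(0:ℝ)| = K * (1 - τ) := by
    rw [Real.dist_eq, abs_zero, abs_sub_comm, abs_of_nonneg (by linarith [hτ.2] : (0:ℝ) ≤ 1 - τ)]
    ring
  rw [hval] at hT
  refine ge_of_tendsto hT ?_
  filter_upwards [eventually_mem_nhdsWithin] with t ht
  have := hlip t ht τ hτ
  rw [Real.norm_eq_abs, Real.norm_eq_abs] at this
  have h2 : |b τ| ≤ |b τ - b t| + |b t| := by
    calc |b τ| = |(b τ - b t) + b t| := by ring_nf
      _ ≤ |b τ - b t| + |b t| := abs_add_le _ _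
  rw [Real.dist_eq]
  calc |b τ| ≤ |b τ - b t| + |b t| := h2
    _ ≤ K * |τ - t| + |b t| := by linarith [this]
    _ = K * dist τ t + |b t| := by rw [Real.dist_eq]
lemma stmt13_Qd (n : ℕ) (τ : ℝ) :
    HasDerivAt (fun τ : ℝ => (1 - τ ^ 2) * ((n : ℝ) * τ ^ (n - 1)))
      ((n : ℝ) * ((n : ℝ) - 1) * τ ^ (n - 2) - (n : ℝ) * ((n : ℝ) + 1) * τ ^ n) τ := by
  have hq : HasDerivAt (fun τ : ℝ => 1 - τ ^ 2) (-(2 * τ ^ 1)) τ :=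
    (hasDerivAt_pow 2 τ).const_sub 1
  have hp : HasDerivAt (fun x : ℝ => (n : ℝ) * x ^ (n - 1))
      ((n : ℝ) * (((n - 1 : ℕ) : ℝ) * τ ^ (n - 1 - 1))) τ :=
    (hasDerivAt_pow (n - 1) τ).const_mul (n : ℝ)
  have h := hq.mul hp
  refine h.congr_deriv ?_
  match n with
  | 0 => norm_num
  | 1 => norm_num
  | (k + 2) =>
    simp only [show k + 2 - 1 = k + 1 from rfl, show k + 1 - 1 = k from rfl,
      show k + 2 - 2 = k from rfl]
    push_cast
    ring

set_option maxHeartbeats 2000000 in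
/-- if `λ ≠ k(k+1)` for all `k ∈ ℕ`, every bounded twice-differentiable
solution of Legendre's equation on `(-1,1)` vanishes identically. -/
theorem stmt_13 (lam : ℝ) (hlam : ∀ k : ℕ, lam ≠ (k : ℝ) * ((k : ℝ) + 1)) (a : ℝ → ℝ)
    (hdiff : ∀ τ ∈ Set.Ioo (-1 : ℝ) 1,
      DifferentiableAt ℝ a τ ∧ DifferentiableAt ℝ (deriv a) τ)
    (hode : ∀ τ ∈ Set.Ioo (-1 : ℝ) 1,
      (1 - τ ^ 2) * deriv (deriv a) τ - 2 * τ * deriv a τ + lam * a τ = 0)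
    (hbdd : ∃ M : ℝ, ∀ τ ∈ Set.Ioo (-1 : ℝ) 1, |a τ| ≤ M) :
    ∀ τ ∈ Set.Ioo (-1 : ℝ) 1, a τ = 0 := by
  obtain ⟨M, hM⟩ := hbdd
  have hM0 : 0 ≤ M := le_trans (abs_nonneg _) (hM 0 (by norm_num))
  set K : ℝ := |lam| * M with hKdef
  have hK0 : 0 ≤ K := mul_nonneg (abs_nonneg _) hM0
  have hR := stmt13_bound_right lam M a hdiff hode hM
  -- reflected function
  have hmemR : ∀ τ : ℝ, τ ∈ Set.Ioo (-1 : ℝ) 1 → -τ ∈ Set.Ioo (-1 : ℝ) 1 := by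
    intro τ h
    exact ⟨by linarith [h.2], by linarith [h.1]⟩
  have harderiv : (deriv fun x => a (-x)) = fun x => -deriv a (-x) := by
    funext x; exact deriv_comp_neg a x
  have hdiffR : ∀ τ ∈ Set.Ioo (-1 : ℝ) 1, DifferentiableAt ℝ (fun x => a (-x)) τ ∧
      DifferentiableAt ℝ (deriv fun x => a (-x)) τ := by
    intro τ hτ
    obtain ⟨h1, h2⟩ := hdiff (-τ) (hmemR τ hτ)
    constructor
    · exact (h1.hasDerivAt.comp τ (hasDerivAt_neg τ)).differentiableAt
    · rw [harderiv]
      exact ((h2.hasDerivAt.comp τ (hasDerivAt_neg τ)).neg).differentiableAt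
  have harderiv2 : ∀ τ : ℝ, deriv (deriv fun x => a (-x)) τ = deriv (deriv a) (-τ) := by
    intro τ
    rw [harderiv]
    have h1 : deriv (fun x : ℝ => -deriv a (-x)) τ = -deriv (fun x : ℝ => deriv a (-x)) τ :=
      deriv.neg
    rw [h1, deriv_comp_neg (deriv a) τ, neg_neg]
  have hodeR : ∀ τ ∈ Set.Ioo (-1 : ℝ) 1,
      (1 - τ ^ 2) * deriv (deriv fun x => a (-x)) τ - 2 * τ * deriv (fun x => a (-x)) τ
        + lam * (fun x => a (-x)) τ = 0 := by
    intro τ hτ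
    have h0 := hode (-τ) (hmemR τ hτ)
    rw [harderiv2, congrFun harderiv τ]
    have hsq : (-τ) ^ 2 = τ ^ 2 := by ring
    rw [hsq] at h0
    simp only
    nlinarith [h0]
  have hMR : ∀ τ ∈ Set.Ioo (-1 : ℝ) 1, |(fun x => a (-x)) τ| ≤ M := fun τ h => hM _ (hmemR τ h)
  have hL := stmt13_bound_right lam M (fun x => a (-x)) hdiffR hodeR hMR
  have hLb : ∀ τ ∈ Set.Ioo (-1 : ℝ) 1, |(1 - τ ^ 2) * deriv a τ| ≤ K * (1 + τ) := by
    intro τ hτ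
    have h1 := hL (-τ) (hmemR τ hτ)
    rw [congrFun harderiv (-τ)] at h1
    have h2 : (1 - (-τ) ^ 2) * -deriv a (- -τ) = -((1 - τ ^ 2) * deriv a τ) := by
      rw [neg_neg]; ring
    rw [h2, abs_neg] at h1
    calc |(1 - τ ^ 2) * deriv a τ| ≤ K * (1 - -τ) := h1
      _ = K * (1 + τ) := by ring
  -- derivative bound
  have hda : ∀ τ ∈ Set.Ioo (-1 : ℝ) 1, |deriv a τ| ≤ K := by
    intro τ hτ
    have h4 : (0 : ℝ) < 1 - τ ^ 2 := by nlinarith [hτ.1, hτ.2]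
    rcases le_or_gt 0 τ with h | h
    · have h1 := hR τ hτ
      rw [abs_mul, abs_of_pos h4] at h1
      have h5 : 1 - τ ≤ 1 - τ ^ 2 := by nlinarith [hτ.2]
      have h6 : (1 - τ ^ 2) * |deriv a τ| ≤ K * (1 - τ ^ 2) := le_trans h1 (by nlinarith)
      nlinarith [h4]
    · have h1 := hLb τ hτ
      rw [abs_mul, abs_of_pos h4] at h1
      have h5 : 1 + τ ≤ 1 - τ ^ 2 := by nlinarith [hτ.1]
      have h6 : (1 - τ ^ 2) * |deriv a τ| ≤ K * (1 - τ ^ 2) := le_trans h1 (by nlinarith)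
      nlinarith [h4]
  -- a is Lipschitz on Ioo; extend to g
  have hlipa : LipschitzOnWith (Real.toNNReal K) a (Set.Ioo (-1 : ℝ) 1) := by
    apply LipschitzOnWith.of_dist_le_mul
    intro x hx y hy
    rw [Real.dist_eq, Real.dist_eq, Real.coe_toNNReal K hK0]
    have := (convex_Ioo (-1 : ℝ) 1).norm_image_sub_le_of_norm_hasDerivWithin_le
      (f' := fun τ => deriv a τ)
      (fun τ hτ => (hdiff τ hτ).1.hasDerivAt.hasDerivWithinAt)
      (fun τ hτ => by rw [Real.norm_eq_abs]; exact hda τ hτ) hy hx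
    simpa [Real.norm_eq_abs] using this
  obtain ⟨g, hglip, hgEq⟩ := hlipa.extend_real
  have hgcont : Continuous g := hglip.continuous
  have hga : ∀ τ ∈ Set.Ioo (-1 : ℝ) 1, g τ = a τ := fun τ h => (hgEq h).symm
  have hIccIoo : Set.Icc (-1 : ℝ) 1 = closure (Set.Ioo (-1 : ℝ) 1) :=
    (closure_Ioo (by norm_num : (-1 : ℝ) ≠ 1)).symm
  have hgM : ∀ x ∈ Set.Icc (-1 : ℝ) 1, |g x| ≤ M := by
    have hclosed : IsClosed {x : ℝ | |g x| ≤ M} := isClosed_le hgcont.abs continuous_const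
    intro x hx
    have hsub : Set.Icc (-1 : ℝ) 1 ⊆ {x : ℝ | |g x| ≤ M} := by
      rw [hIccIoo]
      refine closure_minimal (fun y hy => ?_) hclosed
      rw [Set.mem_setOf_eq, hga y hy]
      exact hM y hy
    exact hsub hx
  -- b and its extension B
  set b : ℝ → ℝ := fun τ => (1 - τ ^ 2) * deriv a τ with hbdef
  have hb' : ∀ τ ∈ Set.Ioo (-1 : ℝ) 1, HasDerivAt b (-(lam * a τ)) τ :=
    stmt13_bderiv lam a hdiff hode
  have hlipb : LipschitzOnWith (Real.toNNReal K) b (Set.Ioo (-1 : ℝ) 1) := by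
    apply LipschitzOnWith.of_dist_le_mul
    intro x hx y hy
    rw [Real.dist_eq, Real.dist_eq, Real.coe_toNNReal K hK0]
    have := (convex_Ioo (-1 : ℝ) 1).norm_image_sub_le_of_norm_hasDerivWithin_le
      (f' := fun τ => -(lam * a τ))
      (fun τ hτ => (hb' τ hτ).hasDerivWithinAt)
      (fun τ hτ => by
        rw [Real.norm_eq_abs, abs_neg, abs_mul]
        exact mul_le_mul_of_nonneg_left (hM τ hτ) (abs_nonneg lam)) hy hx
    simpa [Real.norm_eq_abs] using this
  obtain ⟨B, hBlip, hBEq⟩ := hlipb.extend_real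
  have hBb : ∀ τ ∈ Set.Ioo (-1 : ℝ) 1, B τ = b τ := fun τ h => (hBEq h).symm
  have hB1 : B 1 = 0 := by
    have hclosed : IsClosed {x : ℝ | |B x| ≤ K * (1 - x)} :=
      isClosed_le hBlip.continuous.abs (continuous_const.mul (continuous_const.sub continuous_id))
    have hsub : Set.Icc (-1 : ℝ) 1 ⊆ {x : ℝ | |B x| ≤ K * (1 - x)} := by
      rw [hIccIoo]
      refine closure_minimal (fun y hy => ?_) hclosed
      rw [Set.mem_setOf_eq, hBb y hy]
      exact hR y hy
    have h1 := hsub (by norm_num : (1 : ℝ) ∈ Set.Icc (-1 : ℝ) 1)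
    simp only [Set.mem_setOf_eq, sub_self, mul_zero] at h1
    exact abs_eq_zero.1 (le_antisymm h1 (abs_nonneg _))
  have hBm1 : B (-1) = 0 := by
    have hclosed : IsClosed {x : ℝ | |B x| ≤ K * (1 + x)} :=
      isClosed_le hBlip.continuous.abs (continuous_const.mul (continuous_const.add continuous_id))
    have hsub : Set.Icc (-1 : ℝ) 1 ⊆ {x : ℝ | |B x| ≤ K * (1 + x)} := by
      rw [hIccIoo]
      refine closure_minimal (fun y hy => ?_) hclosed
      rw [Set.mem_setOf_eq, hBb y hy]
      exact hLb y hy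
    have h1 := hsub (by norm_num : (-1 : ℝ) ∈ Set.Icc (-1 : ℝ) 1)
    simp only [Set.mem_setOf_eq] at h1
    rw [show (1 : ℝ) + -1 = 0 by ring, mul_zero] at h1
    exact abs_eq_zero.1 (le_antisymm h1 (abs_nonneg _))
  -- moments
  set m : ℕ → ℝ := fun n => ∫ τ in (-1 : ℝ)..1, g τ * τ ^ n with hmdef
  have hrec : ∀ n : ℕ,
      ((n : ℝ) * ((n : ℝ) - 1)) * m (n - 2) + (lam - (n : ℝ) * ((n : ℝ) + 1)) * m n = 0 := by
    intro n
    set F : ℝ → ℝ := fun τ => g τ * ((1 - τ ^ 2) * ((n : ℝ) * τ ^ (n - 1))) - τ ^ n * B τ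
      with hFdef
    set φ : ℝ → ℝ := fun τ =>
      ((n : ℝ) * ((n : ℝ) - 1) * τ ^ (n - 2) - (n : ℝ) * ((n : ℝ) + 1) * τ ^ n
        + lam * τ ^ n) * g τ with hφdef
    have hφcont : Continuous φ := by
      apply Continuous.mul _ hgcont
      exact ((continuous_const.mul (continuous_pow (n - 2))).sub
        (continuous_const.mul (continuous_pow n))).add (continuous_const.mul (continuous_pow n))
    have hFderiv : ∀ x ∈ Set.Ioo (-1 : ℝ) 1, HasDerivAt F (φ x) x := by
      intro x hx
      have hax : HasDerivAt a (deriv a x) x := (hdiff x hx).1.hasDerivAt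
      have hFa : HasDerivAt (fun τ => a τ * ((1 - τ ^ 2) * ((n : ℝ) * τ ^ (n - 1))) - τ ^ n * b τ)
          ((deriv a x * ((1 - x ^ 2) * ((n : ℝ) * x ^ (n - 1)))
            + a x * ((n : ℝ) * ((n : ℝ) - 1) * x ^ (n - 2) - (n : ℝ) * ((n : ℝ) + 1) * x ^ n))
            - (((n : ℝ) * x ^ (n - 1)) * b x + x ^ n * (-(lam * a x)))) x :=
        (hax.mul (stmt13_Qd n x)).sub ((hasDerivAt_pow n x).mul (hb' x hx))
      have hev : F =ᶠ[𝓝 x]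
          (fun τ => a τ * ((1 - τ ^ 2) * ((n : ℝ) * τ ^ (n - 1))) - τ ^ n * b τ) := by
        filter_upwards [isOpen_Ioo.mem_nhds hx] with t ht
        simp only [hFdef, hga t ht, hBb t ht]
      have h2 := hFa.congr_of_eventuallyEq hev
      refine h2.congr_deriv ?_
      simp only [hφdef, hga x hx, hbdef]
      ring
    have hFcont : ContinuousOn F (Set.Icc (-1 : ℝ) 1) := by
      apply Continuous.continuousOn
      exact (hgcont.mul ((continuous_const.sub (continuous_pow 2)).mul
        (continuous_const.mul (continuous_pow (n - 1))))).sub ((continuous_pow n).mul hBlip.continuous)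
    have hφint : IntervalIntegrable φ volume (-1 : ℝ) 1 := hφcont.intervalIntegrable _ _
    have hFTC := intervalIntegral.integral_eq_sub_of_hasDeriv_right_of_le
      (by norm_num : (-1 : ℝ) ≤ 1) hFcont
      (fun x hx => (hFderiv x hx).hasDerivWithinAt) hφint
    have hF1 : F 1 = 0 := by simp [hFdef, hB1]
    have hFm1 : F (-1) = 0 := by
      simp only [hFdef, hBm1, mul_zero, sub_zero]
      norm_num
    rw [hF1, hFm1, sub_zero] at hFTC
    have hint1 : IntervalIntegrable (fun τ => g τ * τ ^ (n - 2)) volume (-1 : ℝ) 1 :=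
      (hgcont.mul (continuous_pow _)).intervalIntegrable _ _
    have hint2 : IntervalIntegrable (fun τ => g τ * τ ^ n) volume (-1 : ℝ) 1 :=
      (hgcont.mul (continuous_pow _)).intervalIntegrable _ _
    have hφeq : ∀ τ : ℝ, φ τ = ((n : ℝ) * ((n : ℝ) - 1)) * (g τ * τ ^ (n - 2))
        + (lam - (n : ℝ) * ((n : ℝ) + 1)) * (g τ * τ ^ n) := by
      intro τ; simp only [hφdef]; ring
    have h3 : (0 : ℝ) = ∫ τ in (-1 : ℝ)..1,
        (((n : ℝ) * ((n : ℝ) - 1)) * (g τ * τ ^ (n - 2))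
          + (lam - (n : ℝ) * ((n : ℝ) + 1)) * (g τ * τ ^ n)) := by
      rw [← hFTC]
      apply intervalIntegral.integral_congr
      intro τ _
      exact hφeq τ
    rw [intervalIntegral.integral_add (hint1.const_mul _) (hint2.const_mul _),
      intervalIntegral.integral_const_mul, intervalIntegral.integral_const_mul] at h3
    simp only [hmdef]
    linarith [h3]
  have hm0 : ∀ n : ℕ, m n = 0 := by
    intro n
    induction n using Nat.strong_induction_on with
    | _ n ih =>
      match n, ih with
      | 0, _ =>
        have h := hrec 0
        have h0 := hlam 0
        norm_num at h h0
        exact h.resolve_left h0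
      | 1, _ =>
        have h := hrec 1
        have h0 := hlam 1
        norm_num at h h0
        rcases h with h1 | h1
        · exact absurd (by linarith : lam = 2) h0
        · exact h1
      | (k + 2), ih =>
        have hk := ih k (by omega)
        have h := hrec (k + 2)
        rw [show k + 2 - 2 = k from rfl, hk, mul_zero, zero_add] at h
        have h0 := hlam (k + 2)
        rcases mul_eq_zero.1 h with h1 | h1
        · exfalso
          apply h0
          push_cast at h1 ⊢
          linarith
        · exact h1
  -- integral against any polynomial vanishes
  have hpint : ∀ p : Polynomial ℝ, ∫ τ in (-1 : ℝ)..1, g τ * p.eval τ = 0 := by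
    intro p
    have heq : ∀ τ : ℝ, g τ * p.eval τ
        = ∑ i ∈ Finset.range (p.natDegree + 1), p.coeff i * (g τ * τ ^ i) := by
      intro τ
      rw [Polynomial.eval_eq_sum_range, Finset.mul_sum]
      apply Finset.sum_congr rfl
      intros; ring
    rw [intervalIntegral.integral_congr (g := fun τ =>
      ∑ i ∈ Finset.range (p.natDegree + 1), p.coeff i * (g τ * τ ^ i)) (fun τ _ => heq τ)]
    rw [intervalIntegral.integral_finset_sum]
    · apply Finset.sum_eq_zero
      intro i _
      rw [intervalIntegral.integral_const_mul]
      have := hm0 i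
      simp only [hmdef] at this
      rw [this, mul_zero]
    · intro i _
      exact (continuous_const.mul (hgcont.mul (continuous_pow i))).intervalIntegrable _ _
  -- L² argument via Weierstrass
  set I : ℝ := ∫ τ in (-1 : ℝ)..1, g τ * g τ with hIdef
  have hInn : 0 ≤ I :=
    intervalIntegral.integral_nonneg (by norm_num) fun u _ => mul_self_nonneg _
  have hIle : ∀ ε : ℝ, 0 < ε → I ≤ (M + 1) * ε * 2 := by
    intro ε hε
    have hmemtop : (ContinuousMap.restrict (Set.Icc (-1 : ℝ) 1) ⟨g, hgcont⟩ :
        C(Set.Icc (-1 : ℝ) 1, ℝ)) ∈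
        closure ((polynomialFunctions (Set.Icc (-1 : ℝ) 1) : Subalgebra ℝ _) : Set _) := by
      rw [← Subalgebra.topologicalClosure_coe, polynomialFunctions_closure_eq_top]
      trivial
    rw [Metric.mem_closure_iff] at hmemtop
    obtain ⟨q, hqmem, hqdist⟩ := hmemtop ε hε
    obtain ⟨p, -, hp⟩ := Subalgebra.mem_map.1 hqmem
    have happ : ∀ x, ∀ hx : x ∈ Set.Icc (-1 : ℝ) 1, |g x - p.eval x| ≤ ε := by
      intro x hx
      have h2 := ContinuousMap.dist_apply_le_dist (f := (ContinuousMap.restrict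
        (Set.Icc (-1 : ℝ) 1) ⟨g, hgcont⟩ : C(Set.Icc (-1 : ℝ) 1, ℝ))) (g := q) ⟨x, hx⟩
      rw [← hp] at h2
      have h3 : dist (g x) (p.eval x) ≤ dist (ContinuousMap.restrict
          (Set.Icc (-1 : ℝ) 1) ⟨g, hgcont⟩ : C(Set.Icc (-1 : ℝ) 1, ℝ))
          ((Polynomial.toContinuousMapOnAlgHom (Set.Icc (-1 : ℝ) 1)) p) := h2
      rw [← Real.dist_eq]
      exact le_of_lt (lt_of_le_of_lt h3 (by rwa [← hp] at hqdist))
    have hsplit : ∀ τ : ℝ, g τ * g τ = g τ * (g τ - p.eval τ) + g τ * p.eval τ := by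
      intro τ; ring
    have hi1 : IntervalIntegrable (fun τ => g τ * (g τ - p.eval τ)) volume (-1 : ℝ) 1 :=
      (hgcont.mul (hgcont.sub p.continuous)).intervalIntegrable _ _
    have hi2 : IntervalIntegrable (fun τ => g τ * p.eval τ) volume (-1 : ℝ) 1 :=
      (hgcont.mul p.continuous).intervalIntegrable _ _
    have hIeq : I = ∫ τ in (-1 : ℝ)..1, g τ * (g τ - p.eval τ) := by
      rw [hIdef, intervalIntegral.integral_congr
        (g := fun τ => g τ * (g τ - p.eval τ) + g τ * p.eval τ) (fun τ _ => hsplit τ),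
        intervalIntegral.integral_add hi1 hi2, hpint p, add_zero]
    have hb2 : |∫ τ in (-1 : ℝ)..1, g τ * (g τ - p.eval τ)| ≤ (M + 1) * ε * |1 - (-1 : ℝ)| := by
      rw [← Real.norm_eq_abs]
      apply intervalIntegral.norm_integral_le_of_norm_le_const
      intro x hx
      have hxI : x ∈ Set.Icc (-1 : ℝ) 1 := by
        rw [Set.uIoc_of_le (by norm_num : (-1 : ℝ) ≤ 1)] at hx
        exact ⟨le_of_lt hx.1, hx.2⟩
      rw [Real.norm_eq_abs, abs_mul]
      have := mul_le_mul (hgM x hxI) (happ x hxI) (abs_nonneg _) hM0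
      calc |g x| * |g x - p.eval x| ≤ M * ε := this
        _ ≤ (M + 1) * ε := by nlinarith
    rw [hIeq]
    calc ∫ τ in (-1 : ℝ)..1, g τ * (g τ - p.eval τ)
        ≤ |∫ τ in (-1 : ℝ)..1, g τ * (g τ - p.eval τ)| := le_abs_self _
      _ ≤ (M + 1) * ε * |1 - (-1 : ℝ)| := hb2
      _ = (M + 1) * ε * 2 := by norm_num
  have hI0 : I = 0 := by
    refine le_antisymm ?_ hInn
    refine le_of_forall_pos_le_add ?_
    intro ε hε
    have h1 := hIle (ε / (2 * (M + 1))) (by positivity)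
    calc I ≤ (M + 1) * (ε / (2 * (M + 1))) * 2 := h1
      _ = ε := by field_simp
      _ ≤ 0 + ε := by linarith
  -- conclude
  intro τ hτ
  by_contra hne
  have hgτ : g τ ≠ 0 := by rw [hga τ hτ]; exact hne
  obtain ⟨δ, hδ, hball⟩ := Metric.continuousAt_iff.1 hgcont.continuousAt (|g τ| / 2)
    (by positivity)
  set s : ℝ := max (τ - δ / 2) ((τ + -1) / 2) with hsdef
  set t : ℝ := min (τ + δ / 2) ((τ + 1) / 2) with htdef
  have hs1 : -1 < s := lt_of_lt_of_le (by linarith [hτ.1]) (le_max_right _ _)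
  have hsτ : s < τ := max_lt (by linarith) (by linarith [hτ.1])
  have hτt : τ < t := lt_min (by linarith) (by linarith [hτ.2])
  have ht1 : t < 1 := lt_of_le_of_lt (min_le_right _ _) (by linarith [hτ.2])
  have hii : ∀ u v : ℝ, IntervalIntegrable (fun x => g x * g x) volume u v :=
    fun u v => (hgcont.mul hgcont).intervalIntegrable _ _
  have hposmid : 0 < ∫ x in s..t, g x * g x := by
    apply intervalIntegral.intervalIntegral_pos_of_pos_on (hii s t)
    · intro x hx
      have hxs : τ - δ / 2 ≤ s := le_max_left _ _
      have hxt : t ≤ τ + δ / 2 := min_le_left _ _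
      have hdist : dist x τ < δ := by
        rw [Real.dist_eq, abs_sub_lt_iff]
        constructor <;> [linarith [hx.2]; linarith [hx.1]]
      have hb3 := hball hdist
      rw [Real.dist_eq] at hb3
      have hne2 : g x ≠ 0 := by
        intro h0
        rw [h0, zero_sub, abs_neg] at hb3
        linarith [abs_nonneg (g τ)]
      exact mul_self_pos.2 hne2
    · exact lt_trans hsτ hτt
  have e1 := intervalIntegral.integral_add_adjacent_intervals (hii (-1) s) (hii s 1)
  have e2 := intervalIntegral.integral_add_adjacent_intervals (hii s t) (hii t 1)
  have n1 : 0 ≤ ∫ x in (-1 : ℝ)..s, g x * g x :=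
    intervalIntegral.integral_nonneg (by linarith) fun u _ => mul_self_nonneg _
  have n2 : 0 ≤ ∫ x in t..(1 : ℝ), g x * g x :=
    intervalIntegral.integral_nonneg (by linarith) fun u _ => mul_self_nonneg _
  have hIpos : 0 < I := by
    have : I = (∫ x in (-1 : ℝ)..s, g x * g x) + ((∫ x in s..t, g x * g x)
        + ∫ x in t..(1 : ℝ), g x * g x) := by
      rw [hIdef, ← e1, e2]
    rw [this]
    linarith
  exact absurd hI0 (ne_of_gt hIpos)
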